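/- The images in R′ of the off-diagonal commutators [x_i, x_{j+1}], for 1 ≤ i < j < n (a family of (n−1)(n−2)/2 elements), are K-linearly independent in R′. -/

import Mathlib

open Finset

/-- The `k`-th elementary polynomial `σ_k` in the noncommuting variables
`x_1, …, x_n` of the free algebra `K⟨x_1,…,x_n⟩`. -/
noncomputable def elemPoly (K : Type*) [Field K] (n k : ℕ) : FreeAlgebra K (Fin n) :=
  ∑ s ∈ Finset.univ.powersetCard k, ((s.sort (· ≤ ·)).map (FreeAlgebra.ι K)).prod

/-- The relation on the free algebra identifying `x_i * σ_k` with `σ_k * x_i`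
for `1 ≤ i, k ≤ n`; the quotient `R′ = P/I` by the two-sided ideal `I` generated
by the commutators `[x_i, σ_k]` is `RingQuot` of this relation. -/
noncomputable def commRel (K : Type*) [Field K] (n : ℕ) :
    FreeAlgebra K (Fin n) → FreeAlgebra K (Fin n) → Prop :=
  fun a b => ∃ (i : Fin n) (k : ℕ), 1 ≤ k ∧ k ≤ n ∧
    a = FreeAlgebra.ι K i * elemPoly K n k ∧ b = elemPoly K n k * FreeAlgebra.ι K i

/-- The quotient ring `R′ = P/I`. -/
noncomputable abbrev Rquot (K : Type*) [Field K] (n : ℕ) := RingQuot (commRel K n)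

/-- The quotient map `P → R′`. -/
noncomputable def mkR (K : Type*) [Field K] (n : ℕ) :
    FreeAlgebra K (Fin n) →ₐ[K] Rquot K n :=
  RingQuot.mkAlgHom K (commRel K n)

/-- The image in `R′` of the generator `x_i`. -/
noncomputable def XR (K : Type*) [Field K] (n : ℕ) (i : Fin n) : Rquot K n :=
  mkR K n (FreeAlgebra.ι K i)

namespace OffDiagAux
variable (K : Type*) [Field K] (n : ℕ)

abbrev W := (ℕ × ℕ) →₀ K

noncomputable def Spos (t : ℕ) : W K :=
  ∑ j ∈ Finset.range n, if t+1 < j then Finsupp.single (t,j) (1:K) else 0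
noncomputable def Sneg (t : ℕ) : W K :=
  ∑ j ∈ Finset.range n, if j+1 < t then Finsupp.single (j,t) (1:K) else 0
noncomputable def Efun (a : ℕ) : W K :=
  ∑ t ∈ Finset.range (a+1), (Spos K n t - Sneg K n t)

noncomputable def g (a b : ℕ) : W K :=
  if a+1 < b then Finsupp.single (a,b) 1
  else if b+1 < a then -Finsupp.single (b,a) 1
  else if b = a+1 then -(Efun K n a)
  else if a = b+1 then Efun K n b
  else 0

lemma g_antisymm (a b : ℕ) : g K n b a = - g K n a b := by
  unfold g
  split_ifs <;> first | (exfalso; omega) | simp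

lemma total_sum : ∑ t ∈ Finset.range n, (Spos K n t - Sneg K n t) = 0 := by
  rw [Finset.sum_sub_distrib, sub_eq_zero]
  unfold Spos Sneg
  rw [Finset.sum_comm]

lemma row_sum (hn : 3 ≤ n) (i : ℕ) (hi : i < n) :
    ∑ j ∈ Finset.range n, g K n i j = 0 := by
  have hg : ∀ j, g K n i j =
      (if i+1 < j then Finsupp.single (i,j) (1:K) else 0)
      + (if j+1 < i then -Finsupp.single (j,i) (1:K) else 0)
      + (if j = i+1 then -(Efun K n i) else 0)
      + (if i = j+1 then Efun K n j else 0) := by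
    intro j
    unfold g
    split_ifs <;> first | (exfalso; omega) | simp
  simp only [hg]
  rw [Finset.sum_add_distrib, Finset.sum_add_distrib, Finset.sum_add_distrib,
    Finset.sum_ite_eq' (Finset.range n) (i+1) (fun _ => -(Efun K n i))]
  have h2 : ∑ j ∈ Finset.range n, (if j+1 < i then -Finsupp.single (j,i) (1:K) else 0)
      = - Sneg K n i := by
    unfold Sneg
    rw [← Finset.sum_neg_distrib]
    exact Finset.sum_congr rfl fun j _ => by split_ifs <;> simp
  have h1 : ∑ j ∈ Finset.range n, (if i+1 < j then Finsupp.single (i,j) (1:K) else 0)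
      = Spos K n i := rfl
  rw [h1, h2]
  rcases Nat.eq_zero_or_pos i with rfl | hipos
  · have h4 : ∑ j ∈ Finset.range n, (if (0:ℕ) = j+1 then Efun K n j else 0) = 0 := by
      apply Finset.sum_eq_zero; intro j _; rw [if_neg (by omega)]
    rw [h4, if_pos (Finset.mem_range.mpr (by omega))]
    rw [show Efun K n 0 = Spos K n 0 - Sneg K n 0 from by
      unfold Efun; rw [Finset.sum_range_one]]
    abel
  · obtain ⟨i', rfl⟩ : ∃ i', i = i'+1 := ⟨i-1, by omega⟩
    have h4 : ∑ j ∈ Finset.range n, (if i'+1 = j+1 then Efun K n j else 0)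
        = Efun K n i' := by
      have : ∀ j, (if i'+1 = j+1 then Efun K n j else 0)
          = (if j = i' then Efun K n j else 0) := by
        intro j; split_ifs <;> first | rfl | omega
      simp only [this]
      rw [Finset.sum_ite_eq' (Finset.range n) i' (fun j => Efun K n j),
        if_pos (Finset.mem_range.mpr (by omega))]
    rw [h4]
    rcases Nat.lt_or_ge (i'+1+1) n with hlt | hge
    · rw [if_pos (Finset.mem_range.mpr hlt)]
      have : Efun K n (i'+1) = Efun K n i' + (Spos K n (i'+1) - Sneg K n (i'+1)) := by
        unfold Efun; rw [Finset.sum_range_succ]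
      rw [this]; abel
    · have hn1 : i'+1+1 = n := by omega
      rw [if_neg (by simp; omega)]
      have ht := total_sum K n
      rw [show Finset.range n = Finset.range (i'+1+1) from by rw [hn1],
        Finset.sum_range_succ] at ht
      have : Efun K n i' = ∑ t ∈ Finset.range (i'+1), (Spos K n t - Sneg K n t) := rfl
      rw [this]
      calc Spos K n (i'+1) + -Sneg K n (i'+1) + 0 +
            ∑ t ∈ Finset.range (i'+1), (Spos K n t - Sneg K n t)
          = ∑ t ∈ Finset.range (i'+1), (Spos K n t - Sneg K n t)
            + (Spos K n (i'+1) - Sneg K n (i'+1)) := by abel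
        _ = 0 := ht


abbrev UU := K × (Fin n → K) × W K

noncomputable def sqL : W K →ₗ[K] (UU K n →ₗ[K] UU K n) where
  toFun w :=
    { toFun := fun u => (0, 0, u.1 • w)
      map_add' := fun u v => by
        simp only [Prod.fst_add, add_smul, Prod.mk_add_mk, add_zero]
      map_smul' := fun c u => by
        simp only [Prod.smul_fst, smul_eq_mul, mul_smul, RingHom.id_apply,
          Prod.smul_mk, smul_zero, mul_zero] }
  map_add' w w' := by
    apply LinearMap.ext; intro u
    simp only [LinearMap.coe_mk, AddHom.coe_mk, LinearMap.add_apply, smul_add,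
      Prod.mk_add_mk, add_zero]
  map_smul' c w := by
    apply LinearMap.ext; intro u
    simp only [LinearMap.coe_mk, AddHom.coe_mk, LinearMap.smul_apply, RingHom.id_apply,
      Prod.smul_mk, smul_zero, smul_comm u.1 c w]

@[simp] lemma sqL_apply (w : W K) (u : UU K n) : sqL K n w u = (0, 0, u.1 • w) := rfl

noncomputable def Tmap (i : Fin n) : UU K n →ₗ[K] UU K n where
  toFun u := (0, u.1 • (Pi.single i (1:K) : Fin n → K), ∑ j : Fin n, u.2.1 j • g K n i.val j.val)
  map_add' u v := by
    simp only [Prod.fst_add, Prod.snd_add, Pi.add_apply, add_smul,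
      Finset.sum_add_distrib, Prod.mk_add_mk, add_zero]

  map_smul' c u := by
    simp only [Prod.smul_fst, Prod.smul_snd, Pi.smul_apply, smul_eq_mul, mul_smul,
      RingHom.id_apply, Prod.smul_mk, smul_zero, mul_zero, Finset.smul_sum]

@[simp] lemma Tmap_apply (i : Fin n) (u : UU K n) :
    Tmap K n i u = (0, u.1 • (Pi.single i (1:K) : Fin n → K),
      ∑ j : Fin n, u.2.1 j • g K n i.val j.val) := rfl

lemma Tmul (a b : Fin n) :
    (Tmap K n a : Module.End K (UU K n)) * Tmap K n b = sqL K n (g K n a.val b.val) := by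
  apply LinearMap.ext; intro u
  rw [Module.End.mul_apply, Tmap_apply, Tmap_apply, sqL_apply, Prod.mk.injEq, Prod.mk.injEq]
  refine ⟨rfl, by simp, ?_⟩
  simp only [Pi.smul_apply, Pi.single_apply, smul_eq_mul,
    mul_ite, mul_one, mul_zero, ite_smul, zero_smul]
  rw [Finset.sum_ite_eq' Finset.univ b (fun j => u.1 • g K n a.val j.val),
    if_pos (Finset.mem_univ b)]

lemma Tmap_mul_sq (a : Fin n) (w : W K) :
    (Tmap K n a : Module.End K (UU K n)) * sqL K n w = 0 := by
  apply LinearMap.ext; intro u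
  rw [Module.End.mul_apply, sqL_apply, Tmap_apply]
  simp

lemma sq_mul_Tmap (a : Fin n) (w : W K) :
    (sqL K n w : Module.End K (UU K n)) * Tmap K n a = 0 := by
  apply LinearMap.ext; intro u
  rw [Module.End.mul_apply, Tmap_apply, sqL_apply]
  simp

def IsSq (f : Module.End K (UU K n)) : Prop := ∃ w, f = sqL K n w

lemma isSq_zero : IsSq K n 0 := ⟨0, by rw [map_zero]⟩

lemma isSq_add {f f' : Module.End K (UU K n)} (h : IsSq K n f) (h' : IsSq K n f') :
    IsSq K n (f + f') := by
  obtain ⟨w, rfl⟩ := h; obtain ⟨w', rfl⟩ := h'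
  exact ⟨w + w', by rw [map_add]⟩

lemma isSq_sum {ι : Type*} (s : Finset ι) (f : ι → Module.End K (UU K n))
    (h : ∀ i ∈ s, IsSq K n (f i)) : IsSq K n (∑ i ∈ s, f i) := by
  classical
  induction s using Finset.induction_on with
  | empty => simpa using isSq_zero K n
  | @insert x s hx ih =>
    rw [Finset.sum_insert hx]
    exact isSq_add K n (h _ (Finset.mem_insert_self _ _))
      (ih fun i hi => h i (Finset.mem_insert_of_mem hi))

lemma listIsSq : ∀ (l : List (Fin n)), 2 ≤ l.length →
    IsSq K n ((l.map fun i => (Tmap K n i : Module.End K (UU K n))).prod)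
  | [], h => by simp at h
  | [a], h => by simp at h
  | [a, b], _ => by
      refine ⟨g K n a.val b.val, ?_⟩
      simp [Tmul]
  | a :: b :: c :: t, _ => by
      obtain ⟨w, hw⟩ := listIsSq (b :: c :: t) (by simp)
      rw [List.map_cons, List.prod_cons, hw, Tmap_mul_sq]
      exact isSq_zero K n

noncomputable def phi : FreeAlgebra K (Fin n) →ₐ[K] Module.End K (UU K n) :=
  FreeAlgebra.lift K (fun i => (Tmap K n i : Module.End K (UU K n)))

@[simp] lemma phi_iota (i : Fin n) : phi K n (FreeAlgebra.ι K i) = Tmap K n i :=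
  FreeAlgebra.lift_ι_apply _ _

lemma phi_list (l : List (Fin n)) :
    phi K n ((l.map (FreeAlgebra.ι K)).prod)
      = (l.map fun i => (Tmap K n i : Module.End K (UU K n))).prod := by
  have he : ⇑(phi K n) ∘ FreeAlgebra.ι K
      = fun i => (Tmap K n i : Module.End K (UU K n)) :=
    funext fun i => phi_iota K n i
  rw [map_list_prod, List.map_map, he]

lemma phi_elem_isSq (k : ℕ) (hk : 2 ≤ k) : IsSq K n (phi K n (elemPoly K n k)) := by
  unfold elemPoly
  rw [map_sum]
  apply isSq_sum
  intro s hs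
  rw [phi_list]
  apply listIsSq
  rw [Finset.length_sort]
  rw [Finset.mem_powersetCard] at hs
  omega

lemma phi_elem_one : phi K n (elemPoly K n 1)
    = ∑ j : Fin n, (Tmap K n j : Module.End K (UU K n)) := by
  unfold elemPoly
  rw [Finset.powersetCard_one, Finset.sum_map, map_sum]
  apply Finset.sum_congr rfl
  intro j _
  simp only [Function.Embedding.coeFn_mk]
  rw [show (Finset.sort {j} (· ≤ ·) : List (Fin n)) = [j] from Finset.sort_singleton (r := (· ≤ ·)) j]
  simp

lemma row_sum_fin (hn : 3 ≤ n) (i : Fin n) :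
    ∑ j : Fin n, g K n i.val j.val = 0 := by
  rw [Fin.sum_univ_eq_sum_range (fun j => g K n i.val j) n]
  exact row_sum K n hn i.val i.isLt

lemma Tmap_comm_sum (hn : 3 ≤ n) (i : Fin n) :
    (Tmap K n i : Module.End K (UU K n)) * (∑ j : Fin n, (Tmap K n j : Module.End K (UU K n)))
      = (∑ j : Fin n, (Tmap K n j : Module.End K (UU K n))) * Tmap K n i := by
  rw [Finset.mul_sum, Finset.sum_mul]
  have h1 : ∑ j : Fin n, (Tmap K n i : Module.End K (UU K n)) * Tmap K n j = 0 := by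
    simp only [Tmul]
    rw [← map_sum, row_sum_fin K n hn i, map_zero]
  have h2 : ∑ j : Fin n, (Tmap K n j : Module.End K (UU K n)) * Tmap K n i = 0 := by
    simp only [Tmul]
    have hA : ∀ j : Fin n, g K n j.val i.val = - g K n i.val j.val :=
      fun j => g_antisymm K n i.val j.val
    simp only [hA]
    rw [← map_sum, Finset.sum_neg_distrib, row_sum_fin K n hn i, neg_zero, map_zero]
  rw [h1, h2]

lemma phi_rel (hn : 3 ≤ n) : ∀ ⦃x y : FreeAlgebra K (Fin n)⦄,
    commRel K n x y → phi K n x = phi K n y := by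
  rintro x y ⟨i, k, hk1, hkn, rfl, rfl⟩
  rw [map_mul, map_mul, phi_iota]
  rcases Nat.lt_or_ge k 2 with hk2 | hk2
  · have : k = 1 := by omega
    subst this
    rw [phi_elem_one]
    exact Tmap_comm_sum K n hn i
  · obtain ⟨w, hw⟩ := phi_elem_isSq K n k hk2
    rw [hw, Tmap_mul_sq, sq_mul_Tmap]

noncomputable def evW : Module.End K (UU K n) →ₗ[K] W K where
  toFun f := (f (1, 0, 0)).2.2
  map_add' _ _ := rfl
  map_smul' _ _ := rfl

end OffDiagAux

/-- The images in `R′` of the off-diagonal commutators `[x_i, x_{j+1}]`,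
`1 ≤ i < j < n` (in one-based labelling; equivalently the commutators
`[x_a, x_b]` with `a + 1 < b` in zero-based labelling) are `K`-linearly
independent in `R′`. -/
theorem offDiagonal_commutators_linearIndependent
    (K : Type*) [Field K] [CharZero K] (n : ℕ) (hn : 3 ≤ n) :
    LinearIndependent K (fun q : {q : Fin n × Fin n // (q.1 : ℕ) + 1 < (q.2 : ℕ)} =>
      XR K n q.1.1 * XR K n q.1.2 - XR K n q.1.2 * XR K n q.1.1) := by
  classical
  set ψ : Rquot K n →ₐ[K] Module.End K (OffDiagAux.UU K n) :=
    RingQuot.liftAlgHom K ⟨OffDiagAux.phi K n, OffDiagAux.phi_rel K n hn⟩ with hψ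
  set L2 : Rquot K n →ₗ[K] OffDiagAux.W K :=
    (2⁻¹ : K) • ((OffDiagAux.evW K n) ∘ₗ ψ.toLinearMap) with hL2
  apply LinearIndependent.of_comp L2
  have hcomp : ⇑L2 ∘ (fun q : {q : Fin n × Fin n // (q.1 : ℕ) + 1 < (q.2 : ℕ)} =>
        XR K n q.1.1 * XR K n q.1.2 - XR K n q.1.2 * XR K n q.1.1)
      = fun q => Finsupp.single ((q.1.1 : ℕ), (q.1.2 : ℕ)) (1:K) := by
    funext q
    obtain ⟨⟨a, b⟩, hq⟩ := q
    have hq' : (a : ℕ) + 1 < (b : ℕ) := hq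
    simp only [Function.comp_apply]
    have h0 : (XR K n a * XR K n b - XR K n b * XR K n a)
        = mkR K n (FreeAlgebra.ι K a * FreeAlgebra.ι K b
            - FreeAlgebra.ι K b * FreeAlgebra.ι K a) := by
      rw [map_sub, map_mul, map_mul]; rfl
    have h1 : ψ (XR K n a * XR K n b - XR K n b * XR K n a)
        = OffDiagAux.phi K n (FreeAlgebra.ι K a * FreeAlgebra.ι K b
            - FreeAlgebra.ι K b * FreeAlgebra.ι K a) := by
      rw [h0, hψ]
      exact RingQuot.liftAlgHom_mkAlgHom_apply K _ (OffDiagAux.phi_rel K n hn) _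
    have h2 : OffDiagAux.phi K n (FreeAlgebra.ι K a * FreeAlgebra.ι K b
            - FreeAlgebra.ι K b * FreeAlgebra.ι K a)
        = OffDiagAux.sqL K n (OffDiagAux.g K n a.val b.val - OffDiagAux.g K n b.val a.val) := by
      rw [map_sub, map_mul, map_mul, OffDiagAux.phi_iota, OffDiagAux.phi_iota,
        OffDiagAux.Tmul, OffDiagAux.Tmul, map_sub]
    have hab : OffDiagAux.g K n a.val b.val = Finsupp.single ((a:ℕ), (b:ℕ)) (1:K) := by
      unfold OffDiagAux.g
      rw [if_pos hq']
    have hba : OffDiagAux.g K n b.val a.val = -Finsupp.single ((a:ℕ), (b:ℕ)) (1:K) := by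
      unfold OffDiagAux.g
      rw [if_neg (by omega), if_pos hq']
    have hL2app : L2 (XR K n a * XR K n b - XR K n b * XR K n a)
        = (2⁻¹ : K) • (OffDiagAux.evW K n (ψ (XR K n a * XR K n b - XR K n b * XR K n a))) := rfl
    rw [hL2app, h1, h2]
    have hev : OffDiagAux.evW K n (OffDiagAux.sqL K n
        (OffDiagAux.g K n a.val b.val - OffDiagAux.g K n b.val a.val))
        = OffDiagAux.g K n a.val b.val - OffDiagAux.g K n b.val a.val := by
      show ((1:K) • _ : OffDiagAux.W K) = _
      rw [one_smul]
    rw [hev, hab, hba, sub_neg_eq_add, ← two_smul K, smul_smul,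
      inv_mul_cancel₀ (two_ne_zero), one_smul]
  rw [hcomp]
  have hinj : Function.Injective
      (fun q : {q : Fin n × Fin n // (q.1 : ℕ) + 1 < (q.2 : ℕ)} =>
        ((q.1.1 : ℕ), (q.1.2 : ℕ))) := by
    intro q q' h
    rw [Prod.ext_iff] at h
    apply Subtype.ext
    rw [Prod.ext_iff]
    exact ⟨Fin.val_injective h.1, Fin.val_injective h.2⟩
  have hb := (Finsupp.basisSingleOne (R := K) (ι := ℕ × ℕ)).linearIndependent.comp _ hinj
  simpa [Finsupp.coe_basisSingleOne, Function.comp_def] using hb
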